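/- arXiv:1712.05218 — 3 statements merged into one kernel-verified Lean document; each statement's English description precedes it below -/
import Mathlib

section
/- Let T be a finite tree and let S be a subset of its vertices with |S| even. Then there exists a partition of S into pairs such that the unique paths in T between the two vertices of each pair are pairwise edge-disjoint. -/
/-- The unique path between `u` and `v` in a tree, as a walk. -/
noncomputable def treePath {α : Type*} {G : SimpleGraph α} (hG : G.IsTree) (u v : α) :
    G.Walk u v :=
  (hG.existsUnique_path u v).exists.choose

namespace TreePairingAux

open SimpleGraph Finset

variable {V : Type*} [DecidableEq V] {T : SimpleGraph V}

lemma treePath_isPath (hT : T.IsTree) (u v : V) : (treePath hT u v).IsPath :=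
  (hT.existsUnique_path u v).exists.choose_spec

lemma treePath_eq (hT : T.IsTree) {u v : V} (p : T.Walk u v) (hp : p.IsPath) :
    treePath hT u v = p :=
  (hT.existsUnique_path u v).unique (treePath_isPath hT u v) hp

lemma treePath_length (hT : T.IsTree) (u v : V) :
    (treePath hT u v).length = T.dist u v := by
  obtain ⟨p, hp, hl⟩ := (hT.isConnected.preconnected u v).exists_path_of_dist
  rw [treePath_eq hT p hp, hl]

lemma adj_dist (hT : T.IsTree) {x y : V} (h : T.Adj x y) : T.dist x y = 1 := by
  have h1 : T.dist x y ≤ 1 := by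
    have := SimpleGraph.dist_le (SimpleGraph.Walk.cons h SimpleGraph.Walk.nil)
    simpa using this
  have h2 : 0 < T.dist x y := hT.isConnected.pos_dist_of_ne h.ne
  omega

lemma dist_add_of_mem_support (hT : T.IsTree) {u v x : V}
    (h : x ∈ (treePath hT u v).support) :
    T.dist u x + T.dist x v = T.dist u v := by
  have e := (treePath hT u v).take_spec h
  have hp := treePath_isPath hT u v
  have hlen := congrArg SimpleGraph.Walk.length e
  rw [SimpleGraph.Walk.length_append,
    (treePath_eq hT _ (hp.takeUntil h)).symm,
    (treePath_eq hT _ (hp.dropUntil h)).symm,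
    treePath_length, treePath_length, treePath_length] at hlen
  exact hlen

lemma dart_dist (hT : T.IsTree) {u v : V} {d : T.Dart}
    (hd : d ∈ (treePath hT u v).darts) :
    T.dist u v = T.dist u d.fst + 1 + T.dist d.snd v := by
  set p := treePath hT u v with hpdef
  have hp : p.IsPath := treePath_isPath hT u v
  have hx : d.fst ∈ p.support := SimpleGraph.Walk.dart_fst_mem_support_of_mem_darts _ hd
  have e := p.take_spec hx
  have hd' : d ∈ (p.takeUntil d.fst hx).darts ∨ d ∈ (p.dropUntil d.fst hx).darts := by
    have : d ∈ ((p.takeUntil d.fst hx).append (p.dropUntil d.fst hx)).darts := by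
      rw [e]; exact hd
    rwa [SimpleGraph.Walk.darts_append, List.mem_append] at this
  have hdrop : d ∈ (p.dropUntil d.fst hx).darts := by
    rcases hd' with h1 | h1
    · exfalso
      set q := p.takeUntil d.fst hx with hq
      have hfst : d.fst ∈ q.darts.map (·.fst) := List.mem_map_of_mem h1
      have hnodup : q.support.Nodup := (hp.takeUntil hx).support_nodup
      rw [← SimpleGraph.Walk.map_fst_darts_append q] at hnodup
      rw [List.nodup_append] at hnodup
      exact hnodup.2.2 _ hfst _ (List.mem_singleton_self _) rfl
    · exact h1
  -- identify the dropUntil walk with treePath d.fst v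
  have hdropeq : p.dropUntil d.fst hx = treePath hT d.fst v :=
    (treePath_eq hT _ (hp.dropUntil hx)).symm
  rw [hdropeq] at hdrop
  have hy : d.snd ∈ (treePath hT d.fst v).support :=
    SimpleGraph.Walk.dart_snd_mem_support_of_mem_darts _ hdrop
  have h1 : T.dist u d.fst + T.dist d.fst v = T.dist u v :=
    dist_add_of_mem_support hT hx
  have h2 : T.dist d.fst d.snd + T.dist d.snd v = T.dist d.fst v :=
    dist_add_of_mem_support hT hy
  have h3 : T.dist d.fst d.snd = 1 := adj_dist hT d.adj
  omega

lemma edge_dist (hT : T.IsTree) {u v x y : V}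
    (he : s(x, y) ∈ (treePath hT u v).edges) :
    T.dist u v = T.dist u x + 1 + T.dist y v ∨
      T.dist u v = T.dist u y + 1 + T.dist x v := by
  rw [SimpleGraph.Walk.edges, List.mem_map] at he
  obtain ⟨d, hd, hde⟩ := he
  have hdd := dart_dist hT hd
  have hde' : s(d.fst, d.snd) = s(x, y) := hde
  rcases Sym2.eq_iff.mp hde' with ⟨h1, h2⟩ | ⟨h1, h2⟩
  · left; rw [← h1, ← h2]; exact hdd
  · right; rw [← h1, ← h2]; exact hdd

/-- A valid pairing of `S`. -/
def Valid (S : Finset V) (M : Finset (V × V)) : Prop :=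
  (∀ p ∈ M, p.1 ∈ S ∧ p.2 ∈ S ∧ p.1 ≠ p.2) ∧
  (∀ v ∈ S, ∃! p : V × V, p ∈ M ∧ (v = p.1 ∨ v = p.2))

lemma exists_valid (S : Finset V) (hS : Even S.card) : ∃ M, Valid S M := by
  generalize hn : S.card = n at hS
  induction n using Nat.strong_induction_on generalizing S with
  | _ n ih =>
    rcases Finset.eq_empty_or_nonempty S with rfl | ⟨a, ha⟩
    · exact ⟨∅, fun p hp => absurd hp (by simp), fun v hv => absurd hv (by simp)⟩
    · have hcard2 : 2 ≤ n := by
        rcases hS with ⟨k, hk⟩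
        have : 1 ≤ S.card := Finset.card_pos.mpr ⟨a, ha⟩
        omega
      have hbne : (S.erase a).Nonempty := by
        rw [← Finset.card_pos, Finset.card_erase_of_mem ha]; omega
      obtain ⟨b, hb⟩ := hbne
      have hba : b ≠ a := Finset.ne_of_mem_erase hb
      have hbS : b ∈ S := Finset.mem_of_mem_erase hb
      set S' := (S.erase a).erase b with hS'
      have hcard' : S'.card = n - 2 := by
        rw [hS', Finset.card_erase_of_mem hb, Finset.card_erase_of_mem ha, hn]
        omega
      have heven' : Even (n - 2) := hS.tsub (by decide)
      obtain ⟨M', hM'⟩ := ih (n - 2) (by omega) S' hcard' heven'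
      have hS'sub : S' ⊆ S := (Finset.erase_subset _ _).trans (Finset.erase_subset _ _)
      have haS' : a ∉ S' := fun h => Finset.notMem_erase a _ (Finset.mem_of_mem_erase h)
      have hbS' : b ∉ S' := Finset.notMem_erase b _
      refine ⟨insert (a, b) M', ?_, ?_⟩
      · intro p hp
        rcases Finset.mem_insert.mp hp with rfl | hp
        · exact ⟨ha, hbS, fun h => hba h.symm⟩
        · obtain ⟨h1, h2, h3⟩ := hM'.1 p hp
          exact ⟨hS'sub h1, hS'sub h2, h3⟩
      · intro v hv
        have hM'comp : ∀ r ∈ M', r.1 ∈ S' ∧ r.2 ∈ S' := fun r hr =>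
          ⟨(hM'.1 r hr).1, (hM'.1 r hr).2.1⟩
        by_cases hva : v = a
        · refine ⟨(a, b), ⟨Finset.mem_insert_self _ _, Or.inl hva⟩, ?_⟩
          rintro r ⟨hr, hvr⟩
          rcases Finset.mem_insert.mp hr with rfl | hr
          · rfl
          · exfalso; obtain ⟨h1, h2⟩ := hM'comp r hr
            rcases hvr with h | h
            · exact haS' (hva ▸ h ▸ h1)
            · exact haS' (hva ▸ h ▸ h2)
        · by_cases hvb : v = b
          · refine ⟨(a, b), ⟨Finset.mem_insert_self _ _, Or.inr hvb⟩, ?_⟩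
            rintro r ⟨hr, hvr⟩
            rcases Finset.mem_insert.mp hr with rfl | hr
            · rfl
            · exfalso; obtain ⟨h1, h2⟩ := hM'comp r hr
              rcases hvr with h | h
              · exact hbS' (hvb ▸ h ▸ h1)
              · exact hbS' (hvb ▸ h ▸ h2)
          · have hvS' : v ∈ S' := by
              rw [hS', Finset.mem_erase, Finset.mem_erase]
              exact ⟨hvb, hva, hv⟩
            obtain ⟨r₀, ⟨hr₀, hvr₀⟩, hu⟩ := hM'.2 v hvS'
            refine ⟨r₀, ⟨Finset.mem_insert_of_mem hr₀, hvr₀⟩, ?_⟩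
            rintro r ⟨hr, hvr⟩
            rcases Finset.mem_insert.mp hr with rfl | hr
            · exfalso
              rcases hvr with h | h
              · exact hva h
              · exact hvb h
            · exact hu r ⟨hr, hvr⟩

lemma valid_swap (S : Finset V) (M : Finset (V × V)) (hM : Valid S M)
    {p q : V × V} (hp : p ∈ M) (hq : q ∈ M) (hpq : p ≠ q) {c' d' : V}
    (hcd : (c' = q.1 ∧ d' = q.2) ∨ (c' = q.2 ∧ d' = q.1)) :
    Valid S (insert (p.1, c') (insert (p.2, d') ((M.erase p).erase q))) ∧
    ∀ f : V × V → ℕ,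
      (∑ r ∈ insert (p.1, c') (insert (p.2, d') ((M.erase p).erase q)), f r)
        + f p + f q = (∑ r ∈ M, f r) + f (p.1, c') + f (p.2, d') := by
  obtain ⟨ha, hb, hab⟩ := hM.1 p hp
  obtain ⟨hc, hd, hcdne⟩ := hM.1 q hq
  have uniq : ∀ v ∈ S, ∀ r ∈ M, ∀ r' ∈ M,
      (v = r.1 ∨ v = r.2) → (v = r'.1 ∨ v = r'.2) → r = r' := by
    intro v hv r hr r' hr' h1 h2
    obtain ⟨w, _, hw⟩ := hM.2 v hv
    rw [hw r ⟨hr, h1⟩, hw r' ⟨hr', h2⟩]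
  have hac : p.1 ≠ q.1 := fun h => hpq (uniq p.1 ha p hp q hq (Or.inl rfl) (Or.inl h))
  have had : p.1 ≠ q.2 := fun h => hpq (uniq p.1 ha p hp q hq (Or.inl rfl) (Or.inr h))
  have hbc : p.2 ≠ q.1 := fun h => hpq (uniq p.2 hb p hp q hq (Or.inr rfl) (Or.inl h))
  have hbd : p.2 ≠ q.2 := fun h => hpq (uniq p.2 hb p hp q hq (Or.inr rfl) (Or.inr h))
  set M₀ := (M.erase p).erase q with hM₀def
  have hM₀mem : ∀ r ∈ M₀, r ∈ M ∧ r ≠ p ∧ r ≠ q := by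
    intro r hr
    obtain ⟨hrq, hr'⟩ := Finset.mem_erase.mp hr
    obtain ⟨hrp, hrM⟩ := Finset.mem_erase.mp hr'
    exact ⟨hrM, hrp, hrq⟩
  have keyp : ∀ v ∈ S, (v = p.1 ∨ v = p.2) → ∀ r ∈ M₀, ¬(v = r.1 ∨ v = r.2) := by
    intro v hv hvp r hr hvr
    obtain ⟨hrM, hrp, _⟩ := hM₀mem r hr
    exact hrp (uniq v hv r hrM p hp hvr hvp)
  have keyq : ∀ v ∈ S, (v = q.1 ∨ v = q.2) → ∀ r ∈ M₀, ¬(v = r.1 ∨ v = r.2) := by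
    intro v hv hvq r hr hvr
    obtain ⟨hrM, _, hrq⟩ := hM₀mem r hr
    exact hrq (uniq v hv r hrM q hq hvr hvq)
  have hc'S : c' ∈ S := by rcases hcd with ⟨h, _⟩ | ⟨h, _⟩ <;> rw [h] <;> assumption
  have hd'S : d' ∈ S := by rcases hcd with ⟨_, h⟩ | ⟨_, h⟩ <;> rw [h] <;> assumption
  have hac' : p.1 ≠ c' := by rcases hcd with ⟨h, _⟩ | ⟨h, _⟩ <;> rw [h] <;> assumption
  have hbd' : p.2 ≠ d' := by rcases hcd with ⟨_, h⟩ | ⟨_, h⟩ <;> rw [h] <;> assumption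
  have hbc' : p.2 ≠ c' := by rcases hcd with ⟨h, _⟩ | ⟨h, _⟩ <;> rw [h] <;> assumption
  have had' : p.1 ≠ d' := by rcases hcd with ⟨_, h⟩ | ⟨_, h⟩ <;> rw [h] <;> assumption
  have hc'd' : c' ≠ d' := by
    rcases hcd with ⟨h1, h2⟩ | ⟨h1, h2⟩ <;> rw [h1, h2]
    · exact hcdne
    · exact fun h => hcdne h.symm
  have hc'q : c' = q.1 ∨ c' = q.2 := by
    rcases hcd with ⟨h, _⟩ | ⟨h, _⟩
    · exact Or.inl h
    · exact Or.inr h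
  have hd'q : d' = q.1 ∨ d' = q.2 := by
    rcases hcd with ⟨_, h⟩ | ⟨_, h⟩
    · exact Or.inr h
    · exact Or.inl h
  have hnotin1 : (p.1, c') ∉ insert (p.2, d') M₀ := by
    intro h
    rcases Finset.mem_insert.mp h with h | h
    · exact hab (congrArg Prod.fst h)
    · exact keyp p.1 ha (Or.inl rfl) _ h (Or.inl rfl)
  have hnotin2 : (p.2, d') ∉ M₀ := fun h => keyp p.2 hb (Or.inr rfl) _ h (Or.inl rfl)
  constructor
  · constructor
    · intro r hr
      rcases Finset.mem_insert.mp hr with rfl | hr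
      · exact ⟨ha, hc'S, hac'⟩
      rcases Finset.mem_insert.mp hr with rfl | hr
      · exact ⟨hb, hd'S, hbd'⟩
      · exact hM.1 r (hM₀mem r hr).1
    · intro v hv
      by_cases hva : v = p.1
      · refine ⟨(p.1, c'), ⟨Finset.mem_insert_self _ _, Or.inl hva⟩, ?_⟩
        rintro r ⟨hr, hvr⟩
        rcases Finset.mem_insert.mp hr with rfl | hr
        · rfl
        rcases Finset.mem_insert.mp hr with rfl | hr
        · exfalso; rcases hvr with h | h
          · exact hab (hva ▸ h)
          · exact had' (hva ▸ h)
        · exact absurd hvr (keyp v hv (Or.inl hva) r hr)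
      by_cases hvb : v = p.2
      · refine ⟨(p.2, d'), ⟨Finset.mem_insert_of_mem (Finset.mem_insert_self _ _),
          Or.inl hvb⟩, ?_⟩
        rintro r ⟨hr, hvr⟩
        rcases Finset.mem_insert.mp hr with rfl | hr
        · exfalso; rcases hvr with h | h
          · exact hab (hvb ▸ h).symm
          · exact hbc' (hvb ▸ h)
        rcases Finset.mem_insert.mp hr with rfl | hr
        · rfl
        · exact absurd hvr (keyp v hv (Or.inr hvb) r hr)
      by_cases hvc : v = c'
      · refine ⟨(p.1, c'), ⟨Finset.mem_insert_self _ _, Or.inr hvc⟩, ?_⟩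
        rintro r ⟨hr, hvr⟩
        rcases Finset.mem_insert.mp hr with rfl | hr
        · rfl
        rcases Finset.mem_insert.mp hr with rfl | hr
        · exfalso; rcases hvr with h | h
          · exact hbc' ((hvc ▸ h : c' = p.2)).symm
          · exact hc'd' (hvc ▸ h)
        · refine absurd hvr (keyq v hv ?_ r hr)
          rcases hc'q with h | h
          · exact Or.inl (hvc.trans h)
          · exact Or.inr (hvc.trans h)
      by_cases hvd : v = d'
      · refine ⟨(p.2, d'), ⟨Finset.mem_insert_of_mem (Finset.mem_insert_self _ _),
          Or.inr hvd⟩, ?_⟩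
        rintro r ⟨hr, hvr⟩
        rcases Finset.mem_insert.mp hr with rfl | hr
        · exfalso; rcases hvr with h | h
          · exact had' ((hvd ▸ h : d' = p.1)).symm
          · exact hc'd' ((hvd ▸ h : d' = c')).symm
        rcases Finset.mem_insert.mp hr with rfl | hr
        · rfl
        · refine absurd hvr (keyq v hv ?_ r hr)
          rcases hd'q with h | h
          · exact Or.inl (hvd.trans h)
          · exact Or.inr (hvd.trans h)
      · -- v not among p.1, p.2, c', d'; note {c',d'} = {q.1,q.2}
        have hvq1 : v ≠ q.1 := by
          rcases hcd with ⟨h1, h2⟩ | ⟨h1, h2⟩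
          · exact fun h => hvc (h.trans h1.symm)
          · exact fun h => hvd (h.trans h2.symm)
        have hvq2 : v ≠ q.2 := by
          rcases hcd with ⟨h1, h2⟩ | ⟨h1, h2⟩
          · exact fun h => hvd (h.trans h2.symm)
          · exact fun h => hvc (h.trans h1.symm)
        obtain ⟨r₀, ⟨hr₀, hvr₀⟩, hu⟩ := hM.2 v hv
        have hr₀p : r₀ ≠ p := by
          rintro rfl
          rcases hvr₀ with h | h
          · exact hva h
          · exact hvb h
        have hr₀q : r₀ ≠ q := by
          rintro rfl
          rcases hvr₀ with h | h
          · exact hvq1 h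
          · exact hvq2 h
        have hr₀M₀ : r₀ ∈ M₀ := Finset.mem_erase.mpr ⟨hr₀q, Finset.mem_erase.mpr ⟨hr₀p, hr₀⟩⟩
        refine ⟨r₀, ⟨Finset.mem_insert_of_mem (Finset.mem_insert_of_mem hr₀M₀), hvr₀⟩, ?_⟩
        rintro r ⟨hr, hvr⟩
        rcases Finset.mem_insert.mp hr with rfl | hr
        · exfalso; rcases hvr with h | h
          · exact hva h
          · exact hvc h
        rcases Finset.mem_insert.mp hr with rfl | hr
        · exfalso; rcases hvr with h | h
          · exact hvb h
          · exact hvd h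
        · exact hu r ⟨(hM₀mem r hr).1, hvr⟩
  · intro f
    have e1 : (∑ r ∈ insert (p.1, c') (insert (p.2, d') M₀), f r)
        = f (p.1, c') + (f (p.2, d') + ∑ r ∈ M₀, f r) := by
      rw [Finset.sum_insert hnotin1, Finset.sum_insert hnotin2]
    have hqep : q ∈ M.erase p := Finset.mem_erase.mpr ⟨fun h => hpq h.symm, hq⟩
    have e2 : f p + ∑ r ∈ M.erase p, f r = ∑ r ∈ M, f r :=
      Finset.add_sum_erase M f hp
    have e3 : f q + ∑ r ∈ M₀, f r = ∑ r ∈ M.erase p, f r :=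
      Finset.add_sum_erase _ f hqep
    omega

lemma exchange (hT : T.IsTree) (S : Finset V) (M : Finset (V × V)) (hM : Valid S M)
    {p q : V × V} (hp : p ∈ M) (hq : q ∈ M) (hpq : p ≠ q) {x y : V}
    (H1 : T.dist p.1 p.2 = T.dist p.1 x + 1 + T.dist y p.2)
    (H2 : T.dist q.1 q.2 = T.dist q.1 x + 1 + T.dist y q.2 ∨
          T.dist q.1 q.2 = T.dist q.1 y + 1 + T.dist x q.2) :
    ∃ M' : Finset (V × V), Valid S M' ∧
      (∑ r ∈ M', T.dist r.1 r.2) < ∑ r ∈ M, T.dist r.1 r.2 := by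
  have hconn := hT.isConnected
  rcases H2 with H2 | H2
  · -- same orientation: pair (p.1, q.1) and (p.2, q.2)
    obtain ⟨hval, hsum⟩ := valid_swap S M hM hp hq hpq (c' := q.1) (d' := q.2)
      (Or.inl ⟨rfl, rfl⟩)
    refine ⟨_, hval, ?_⟩
    have hs := hsum (fun r => T.dist r.1 r.2)
    have t1 : T.dist p.1 q.1 ≤ T.dist p.1 x + T.dist x q.1 := hconn.dist_triangle
    have t2 : T.dist p.2 q.2 ≤ T.dist p.2 y + T.dist y q.2 := hconn.dist_triangle
    have c1 : T.dist x q.1 = T.dist q.1 x := SimpleGraph.dist_comm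
    have c2 : T.dist p.2 y = T.dist y p.2 := SimpleGraph.dist_comm
    simp only at hs
    omega
  · -- opposite orientation: pair (p.1, q.2) and (p.2, q.1)
    obtain ⟨hval, hsum⟩ := valid_swap S M hM hp hq hpq (c' := q.2) (d' := q.1)
      (Or.inr ⟨rfl, rfl⟩)
    refine ⟨_, hval, ?_⟩
    have hs := hsum (fun r => T.dist r.1 r.2)
    have t1 : T.dist p.1 q.2 ≤ T.dist p.1 x + T.dist x q.2 := hconn.dist_triangle
    have t2 : T.dist p.2 q.1 ≤ T.dist p.2 y + T.dist y q.1 := hconn.dist_triangle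
    have c1 : T.dist p.2 y = T.dist y p.2 := SimpleGraph.dist_comm
    have c2 : T.dist y q.1 = T.dist q.1 y := SimpleGraph.dist_comm
    simp only at hs
    omega

end TreePairingAux

open TreePairingAux in
/-- Tree pairing lemma (Klein–Ravi): given a finite tree `T` and an even subset `S` of
its vertices, `S` can be partitioned into pairs such that the unique paths in `T`
between the two vertices of each pair are pairwise edge-disjoint. -/
theorem tree_pairing {V : Type*} [Fintype V] [DecidableEq V] {T : SimpleGraph V}
    (hT : T.IsTree) (S : Finset V) (hS : Even S.card) :
    ∃ M : Finset (V × V),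
      (∀ p ∈ M, p.1 ∈ S ∧ p.2 ∈ S ∧ p.1 ≠ p.2) ∧
      (∀ v ∈ S, ∃! p : V × V, p ∈ M ∧ (v = p.1 ∨ v = p.2)) ∧
      (∀ p ∈ M, ∀ q ∈ M, p ≠ q →
        Disjoint (treePath hT p.1 p.2).edges.toFinset
          (treePath hT q.1 q.2).edges.toFinset) := by
  classical
  obtain ⟨M0, hM0⟩ := exists_valid S hS
  have hsub : ∀ M : Finset (V × V), Valid S M → M ⊆ S ×ˢ S := by
    intro M hM r hr
    obtain ⟨h1, h2, _⟩ := hM.1 r hr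
    exact Finset.mem_product.mpr ⟨h1, h2⟩
  set C := (S ×ˢ S).powerset.filter (fun M => Valid S M) with hC
  have hM0C : M0 ∈ C := Finset.mem_filter.mpr
    ⟨Finset.mem_powerset.mpr (hsub M0 hM0), hM0⟩
  obtain ⟨M, hMC, hmin⟩ :=
    C.exists_min_image (fun M => ∑ r ∈ M, T.dist r.1 r.2) ⟨M0, hM0C⟩
  have hMval : Valid S M := (Finset.mem_filter.mp hMC).2
  refine ⟨M, hMval.1, hMval.2, ?_⟩
  intro p hp q hq hpq
  by_contra h
  obtain ⟨e, he1, he2⟩ := Finset.not_disjoint_iff.mp h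
  rw [List.mem_toFinset] at he1 he2
  revert he1 he2
  induction e using Sym2.ind with
  | _ x y =>
    intro he1 he2
    have Hp := edge_dist hT he1
    have Hq := edge_dist hT he2
    have hlt : ∃ M' : Finset (V × V), Valid S M' ∧
        (∑ r ∈ M', T.dist r.1 r.2) < ∑ r ∈ M, T.dist r.1 r.2 := by
      rcases Hp with Hp | Hp
      · exact exchange hT S M hMval hp hq hpq Hp Hq
      · exact exchange hT S M hMval hp hq hpq Hp (Hq.symm)
    obtain ⟨M', hM'val, hM'lt⟩ := hlt
    have hM'C : M' ∈ C := Finset.mem_filter.mpr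
      ⟨Finset.mem_powerset.mpr (hsub M' hM'val), hM'val⟩
    have := hmin M' hM'C
    omega
end

section
/- Let T be a finite tree on vertex set V with nonnegative edge weights, n = |V|, total edge weight c(T), and weighted tree metric d_T. Let τ : V → ℕ and let s ∈ V satisfy τ(s) < τ(v) for all v ≠ s. Then there exists a function parent : V ∖ {s} → V such that (i) for every v ≠ s, τ(parent(v)) ≤ τ(v); (ii) the arcs (parent(v), v) form a spanning arborescence rooted at s (i.e., iterating parent from any vertex reaches s); and (iii) Σ_{v ≠ s} d_T(v, parent(v)) ≤ ⌈log₂ n⌉ · c(T). -/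
set_option linter.unusedSectionVars false


open scoped BigOperators

/-- The weighted shortest-path (tree) metric: the total weight of the unique path. -/
noncomputable def treeDist {α : Type*} {G : SimpleGraph α} (hG : G.IsTree)
    (w : Sym2 α → ℝ) (u v : α) : ℝ :=
  ((treePath hG u v).edges.map w).sum

section Lemmas
variable {α : Type*} {G : SimpleGraph α} (hG : G.IsTree) (w : Sym2 α → ℝ)

lemma treePath_isPath (u v : α) : (treePath hG u v).IsPath :=
  (hG.existsUnique_path u v).exists.choose_spec

lemma treePath_unique {u v : α} (p : G.Walk u v) (hp : p.IsPath) : p = treePath hG u v :=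
  ((hG.existsUnique_path u v).unique hp (treePath_isPath hG u v))

lemma treeDist_eq {u v : α} (p : G.Walk u v) (hp : p.IsPath) :
    treeDist hG w u v = (p.edges.map w).sum := by
  rw [treeDist, ← treePath_unique hG p hp]

lemma treeDist_refl (u : α) : treeDist hG w u u = 0 := by
  rw [treeDist_eq hG w (SimpleGraph.Walk.nil) (by simp)]; simp

lemma treeDist_symm (u v : α) : treeDist hG w u v = treeDist hG w v u := by
  rw [treeDist_eq hG w (treePath hG u v).reverse ((treePath_isPath hG u v).reverse),
    SimpleGraph.Walk.edges_reverse, List.map_reverse, List.sum_reverse, treeDist]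

variable (hw : ∀ e ∈ G.edgeSet, 0 ≤ w e)

include hw in
lemma list_sum_bound {l₁ l₂ : List (Sym2 α)} (h1 : l₁.Nodup) (hsub : l₁ ⊆ l₂)
    (h2 : ∀ e ∈ l₂, e ∈ G.edgeSet) : (l₁.map w).sum ≤ (l₂.map w).sum := by
  classical
  have h1' : (l₁.map w).sum = ∑ e ∈ l₁.toFinset, w e := by
    rw [List.sum_toFinset _ h1]
  have h2' : (l₂.dedup.map w).sum = ∑ e ∈ l₂.toFinset, w e := by
    have : l₂.dedup.toFinset = l₂.toFinset := by ext e; simp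
    rw [← this, List.sum_toFinset _ l₂.nodup_dedup]
  have hstep : ∑ e ∈ l₁.toFinset, w e ≤ ∑ e ∈ l₂.toFinset, w e := by
    apply Finset.sum_le_sum_of_subset_of_nonneg
    · intro e he; rw [List.mem_toFinset] at *; exact hsub he
    · intro e he _; exact hw e (h2 e (List.mem_toFinset.mp he))
  have hd : (l₂.dedup.map w).sum ≤ (l₂.map w).sum := by
    apply List.Sublist.sum_le_sum (List.Sublist.map w l₂.dedup_sublist)
    intro x hx
    rw [List.mem_map] at hx
    obtain ⟨e, he, rfl⟩ := hx
    exact hw e (h2 e he)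
  linarith
end Lemmas

section Lemmas2
variable {α : Type*} [DecidableEq α] {G : SimpleGraph α} (hG : G.IsTree) (w : Sym2 α → ℝ)
  (hw : ∀ e ∈ G.edgeSet, 0 ≤ w e)

include hw in
lemma treeDist_le_walk {u v : α} (p : G.Walk u v) :
    treeDist hG w u v ≤ (p.edges.map w).sum := by
  rw [treeDist_eq hG w p.bypass p.bypass_isPath]
  exact list_sum_bound w hw p.bypass_isPath.edges_nodup p.edges_bypass_subset
    (fun e he => p.edges_subset_edgeSet he)

include hw in
lemma treeDist_nonneg (u v : α) : 0 ≤ treeDist hG w u v := by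
  rw [treeDist]
  apply List.sum_nonneg
  intro x hx
  rw [List.mem_map] at hx
  obtain ⟨e, he, rfl⟩ := hx
  exact hw e ((treePath hG u v).edges_subset_edgeSet he)

include hw in
lemma treeDist_triangle (u x v : α) :
    treeDist hG w u v ≤ treeDist hG w u x + treeDist hG w x v := by
  have h := treeDist_le_walk hG w hw ((treePath hG u x).append (treePath hG x v))
  rwa [SimpleGraph.Walk.edges_append, List.map_append, List.sum_append] at h

/-- splitting the tree distance at a dart of the unique path -/
lemma treeDist_split {u v : α} (d : G.Dart) (hd : d ∈ (treePath hG u v).darts) :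
    treeDist hG w u v
      = treeDist hG w u d.toProd.1 + w d.edge + treeDist hG w d.toProd.2 v := by
  classical
  suffices H : ∀ {a b : α} (p : G.Walk a b), p.IsPath → d ∈ p.darts →
      treeDist hG w a b
        = treeDist hG w a d.toProd.1 + w d.edge + treeDist hG w d.toProd.2 b by
    exact H (treePath hG u v) (treePath_isPath hG u v) hd
  intro a b p
  induction p with
  | nil => intro _ h; simp at h
  | @cons a a' b hadj q ih =>
    intro hp hdm
    have hp1 : q.IsPath := ((SimpleGraph.Walk.cons_isPath_iff hadj q).mp hp).1
    have hp2 : a ∉ q.support := ((SimpleGraph.Walk.cons_isPath_iff hadj q).mp hp).2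
    rw [SimpleGraph.Walk.darts_cons, List.mem_cons] at hdm
    have key2 : treeDist hG w a b = w s(a, a') + treeDist hG w a' b := by
      rw [treeDist_eq hG w _ hp, SimpleGraph.Walk.edges_cons, List.map_cons, List.sum_cons,
        treeDist_eq hG w q hp1]
    rcases hdm with rfl | hdm
    · have he : (SimpleGraph.Dart.mk (a, a') hadj).edge = s(a, a') := rfl
      rw [key2, he, treeDist_refl]
      ring
    · have hz : d.toProd.1 ∈ q.support := SimpleGraph.Walk.dart_fst_mem_support_of_mem_darts q hdm
      have hq1 : (q.takeUntil _ hz).IsPath := hp1.takeUntil hz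
      have key : treeDist hG w a d.toProd.1
          = w s(a, a') + treeDist hG w a' d.toProd.1 := by
        have hcons : (SimpleGraph.Walk.cons hadj (q.takeUntil _ hz)).IsPath := by
          rw [SimpleGraph.Walk.cons_isPath_iff]
          exact ⟨hq1, fun hmem => hp2 (SimpleGraph.Walk.support_takeUntil_subset q hz hmem)⟩
        rw [treeDist_eq hG w _ hcons, SimpleGraph.Walk.edges_cons, List.map_cons, List.sum_cons,
          treeDist_eq hG w (q.takeUntil _ hz) hq1]
      rw [key2, ih hp1 hdm, key]
      ring
end Lemmas2

section Pairing
variable {V : Type*} [Fintype V] [DecidableEq V] {T : SimpleGraph V} [DecidableRel T.Adj]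

/-- orient a pair by increasing key -/
def orient (key : V → ℕ) (x y : V) : V × V := if key x < key y then (x, y) else (y, x)

lemma orient_mem (key : V → ℕ) (x y : V) :
    (orient key x y).1 = x ∧ (orient key x y).2 = y ∨
      (orient key x y).1 = y ∧ (orient key x y).2 = x := by
  unfold orient; split <;> simp

lemma orient_key (key : V → ℕ) {x y : V} (h : key x ≠ key y) :
    key (orient key x y).1 < key (orient key x y).2 := by
  rcases lt_or_gt_of_ne h with hlt | hgt
  · simp [orient, hlt]
  · simp [orient, not_lt.mpr (le_of_lt hgt), hgt]

/-- a partial pairing of `U`: oriented pairs, pairwise disjoint, covering all but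
at most one element of `U` -/
def IsPairing (key : V → ℕ) (U : Finset V) (M : Finset (V × V)) : Prop :=
  (∀ p ∈ M, p.1 ∈ U ∧ p.2 ∈ U ∧ key p.1 < key p.2) ∧
  (∀ p ∈ M, ∀ q ∈ M, p ≠ q → p.1 ≠ q.1 ∧ p.1 ≠ q.2 ∧ p.2 ≠ q.1 ∧ p.2 ≠ q.2) ∧
  U.card ≤ 2 * M.card + 1

lemma pairing_exists (key : V → ℕ) (hkey : Function.Injective key) (U : Finset V) :
    ∃ M : Finset (V × V), IsPairing key U M := by
  classical
  induction U using Finset.strongInduction with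
  | _ U ih =>
    by_cases hcard : U.card ≤ 1
    · exact ⟨∅, by simp, by simp, by simpa using hcard⟩
    · push_neg at hcard
      obtain ⟨a, ha, b, hb, hab⟩ := Finset.one_lt_card.mp hcard
      set U' := U \ {a, b} with hU'
      have hss : U' ⊂ U := by
        apply Finset.sdiff_ssubset (by simp [Finset.insert_subset_iff, ha, hb]) (by simp)
      obtain ⟨M', hM'⟩ := ih U' hss
      have hkab : key a ≠ key b := fun h => hab (hkey h)
      have hmemU' : ∀ r ∈ M', r.1 ∈ U' ∧ r.2 ∈ U' := fun r hr => ⟨(hM'.1 r hr).1, (hM'.1 r hr).2.1⟩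
      have hnew : orient key a b ∉ M' := by
        intro hmem
        rcases orient_mem key a b with ⟨h1, _⟩ | ⟨h1, _⟩ <;>
          [skip; skip] <;>
        · have := (hmemU' _ hmem).1
          rw [h1, hU'] at this
          simp at this
      refine ⟨insert (orient key a b) M', ?_, ?_, ?_⟩
      · intro p hp
        rcases Finset.mem_insert.mp hp with rfl | hp
        · refine ⟨?_, ?_, orient_key key hkab⟩ <;>
            rcases orient_mem key a b with ⟨h1, h2⟩ | ⟨h1, h2⟩ <;> simp [h1, h2, ha, hb]
        · have h := hM'.1 p hp
          have hsub : U' ⊆ U := Finset.sdiff_subset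
          exact ⟨hsub h.1, hsub h.2.1, h.2.2⟩
      · intro p hp q hq hpq
        have hout : ∀ r ∈ M', r.1 ≠ a ∧ r.1 ≠ b ∧ r.2 ≠ a ∧ r.2 ≠ b := by
          intro r hr
          have h1 := (hmemU' r hr).1
          have h2 := (hmemU' r hr).2
          rw [hU'] at h1 h2
          simp only [Finset.mem_sdiff, Finset.mem_insert, Finset.mem_singleton] at h1 h2
          push_neg at h1 h2
          exact ⟨h1.2.1, h1.2.2, h2.2.1, h2.2.2⟩
        have horient : ∀ z : V, (z = (orient key a b).1 ∨ z = (orient key a b).2) ↔ (z = a ∨ z = b) := by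
          intro z
          rcases orient_mem key a b with ⟨h1, h2⟩ | ⟨h1, h2⟩ <;> rw [h1, h2] <;> tauto
        rcases Finset.mem_insert.mp hp with rfl | hp <;> rcases Finset.mem_insert.mp hq with rfl | hq
        · exact absurd rfl hpq
        · have := hout q hq
          constructor
          · intro h; have := (horient q.1).mp (Or.inl h.symm); tauto
          refine ⟨?_, ?_, ?_⟩
          · intro h; have := (horient q.2).mp (Or.inl h.symm); tauto
          · intro h; have := (horient q.1).mp (Or.inr h.symm); tauto
          · intro h; have := (horient q.2).mp (Or.inr h.symm); tauto
        · have := hout p hp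
          constructor
          · intro h; have := (horient p.1).mp (Or.inl h); tauto
          refine ⟨?_, ?_, ?_⟩
          · intro h; have := (horient p.1).mp (Or.inr h); tauto
          · intro h; have := (horient p.2).mp (Or.inl h); tauto
          · intro h; have := (horient p.2).mp (Or.inr h); tauto
        · exact hM'.2.1 p hp q hq hpq
      · rw [Finset.card_insert_of_notMem hnew]
        have hc : U'.card = U.card - 2 := by
          rw [hU', Finset.card_sdiff_of_subset (by simp [Finset.insert_subset_iff, ha, hb])]
          simp [hab]
        have := hM'.2.2
        omega
end Pairing

section Exchange
variable {V : Type*} [Fintype V] [DecidableEq V] {T : SimpleGraph V} [DecidableRel T.Adj]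
  (hT : T.IsTree) (w : Sym2 V → ℝ)

lemma orient_cost (key : V → ℕ) (x y : V) :
    treeDist hT w (orient key x y).2 (orient key x y).1 = treeDist hT w x y := by
  rcases orient_mem key x y with ⟨h1, h2⟩ | ⟨h1, h2⟩ <;> rw [h1, h2]
  exact treeDist_symm hT w y x

lemma exchange (key : V → ℕ) (hkey : Function.Injective key) {U : Finset V}
    {M : Finset (V × V)} (hM : IsPairing key U M) {p q : V × V}
    (hp : p ∈ M) (hq : q ∈ M) (hpq : p ≠ q) (c d : V)
    (hcd : (c = q.1 ∧ d = q.2) ∨ (c = q.2 ∧ d = q.1))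
    (hcost : treeDist hT w p.1 c + treeDist hT w p.2 d
      < treeDist hT w p.2 p.1 + treeDist hT w q.2 q.1) :
    ∃ M' : Finset (V × V), IsPairing key U M' ∧
      (∑ r ∈ M', treeDist hT w r.2 r.1) < ∑ r ∈ M, treeDist hT w r.2 r.1 := by
  classical
  obtain ⟨a, b⟩ := p
  simp only [] at hcost ⊢
  have hdisjpq := hM.2.1 (a, b) hp q hq hpq
  simp only [] at hdisjpq
  have hkeyp : key a < key b := (hM.1 (a, b) hp).2.2
  have hkeyq := (hM.1 q hq).2.2
  have hab : a ≠ b := fun h => by rw [h] at hkeyp; exact lt_irrefl _ hkeyp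
  have hq12 : q.1 ≠ q.2 := fun h => by rw [h] at hkeyq; exact lt_irrefl _ hkeyq
  have hac : a ≠ c := by rcases hcd with ⟨rfl, _⟩ | ⟨rfl, _⟩ <;> tauto
  have had : a ≠ d := by rcases hcd with ⟨_, rfl⟩ | ⟨_, rfl⟩ <;> tauto
  have hbc : b ≠ c := by rcases hcd with ⟨rfl, _⟩ | ⟨rfl, _⟩ <;> tauto
  have hbd : b ≠ d := by rcases hcd with ⟨_, rfl⟩ | ⟨_, rfl⟩ <;> tauto
  have hcdne : c ≠ d := by rcases hcd with ⟨rfl, rfl⟩ | ⟨rfl, rfl⟩ <;> [exact hq12; exact hq12.symm]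
  have hcU : c ∈ U := by rcases hcd with ⟨rfl, _⟩ | ⟨rfl, _⟩ <;> [exact (hM.1 q hq).1; exact (hM.1 q hq).2.1]
  have hdU : d ∈ U := by rcases hcd with ⟨_, rfl⟩ | ⟨_, rfl⟩ <;> [exact (hM.1 q hq).2.1; exact (hM.1 q hq).1]
  have haU : a ∈ U := (hM.1 (a, b) hp).1
  have hbU : b ∈ U := (hM.1 (a, b) hp).2.1
  set S0 := (M.erase (a, b)).erase q with hS0
  have hqe : q ∈ M.erase (a, b) := Finset.mem_erase.mpr ⟨fun h => hpq h.symm, hq⟩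
  have hS0disj : ∀ r ∈ S0, r.1 ≠ a ∧ r.1 ≠ b ∧ r.1 ≠ c ∧ r.1 ≠ d ∧
      r.2 ≠ a ∧ r.2 ≠ b ∧ r.2 ≠ c ∧ r.2 ≠ d := by
    intro r hr
    rw [hS0, Finset.mem_erase, Finset.mem_erase] at hr
    obtain ⟨hrq, hrp, hrM⟩ := hr
    have h1 := hM.2.1 r hrM (a, b) hp hrp
    have h2 := hM.2.1 r hrM q hq hrq
    simp only [] at h1
    rcases hcd with ⟨rfl, rfl⟩ | ⟨rfl, rfl⟩ <;> tauto
  set n1 := orient key a c with hn1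
  set n2 := orient key b d with hn2
  have hn1ends : (n1.1 = a ∧ n1.2 = c) ∨ (n1.1 = c ∧ n1.2 = a) := orient_mem key a c
  have hn2ends : (n2.1 = b ∧ n2.2 = d) ∨ (n2.1 = d ∧ n2.2 = b) := orient_mem key b d
  have new_new : n1.1 ≠ n2.1 ∧ n1.1 ≠ n2.2 ∧ n1.2 ≠ n2.1 ∧ n1.2 ≠ n2.2 := by
    rcases hn1ends with ⟨h1, h2⟩ | ⟨h1, h2⟩ <;> rcases hn2ends with ⟨h1', h2'⟩ | ⟨h1', h2'⟩ <;>
      rw [h1, h2, h1', h2'] <;> refine ⟨?_, ?_, ?_, ?_⟩ <;>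
      first | exact hab | exact had | exact hbc.symm | exact hcdne | exact hab.symm | exact had.symm | exact hbc | exact hcdne.symm
  have new_old : ∀ z : V × V, ∀ r ∈ S0,
      (((z.1 = a ∧ z.2 = c) ∨ (z.1 = c ∧ z.2 = a)) ∨ ((z.1 = b ∧ z.2 = d) ∨ (z.1 = d ∧ z.2 = b))) →
      z.1 ≠ r.1 ∧ z.1 ≠ r.2 ∧ z.2 ≠ r.1 ∧ z.2 ≠ r.2 := by
    intro z r hr hz
    obtain ⟨t1, t2, t3, t4, t5, t6, t7, t8⟩ := hS0disj r hr
    rcases hz with (⟨h1, h2⟩ | ⟨h1, h2⟩) | (⟨h1, h2⟩ | ⟨h1, h2⟩) <;> rw [h1, h2] <;>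
      refine ⟨?_, ?_, ?_, ?_⟩ <;>
      first | exact t1.symm | exact t2.symm | exact t3.symm | exact t4.symm | exact t5.symm | exact t6.symm | exact t7.symm | exact t8.symm
  have hn1n2 : n1 ≠ n2 := fun h => new_new.1 (by rw [h])
  have hn1S0 : n1 ∉ S0 := by
    intro hmem
    have := new_old n1 n1 hmem (Or.inl hn1ends)
    exact this.1 rfl
  have hn2S0 : n2 ∉ S0 := by
    intro hmem
    have := new_old n2 n2 hmem (Or.inr hn2ends)
    exact this.1 rfl
  have hn1mem : n1 ∉ insert n2 S0 := by
    rw [Finset.mem_insert]; tauto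
  refine ⟨insert n1 (insert n2 S0), ⟨?_, ?_, ?_⟩, ?_⟩
  · intro r hr
    rcases Finset.mem_insert.mp hr with rfl | hr
    · obtain ⟨h1, h2⟩ | ⟨h1, h2⟩ := hn1ends
      · exact ⟨by rw [h1]; exact haU, by rw [h2]; exact hcU, orient_key key (fun h => hac (hkey h))⟩
      · exact ⟨by rw [h1]; exact hcU, by rw [h2]; exact haU, orient_key key (fun h => hac (hkey h))⟩
    · rcases Finset.mem_insert.mp hr with rfl | hr
      · obtain ⟨h1, h2⟩ | ⟨h1, h2⟩ := hn2ends
        · exact ⟨by rw [h1]; exact hbU, by rw [h2]; exact hdU, orient_key key (fun h => hbd (hkey h))⟩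
        · exact ⟨by rw [h1]; exact hdU, by rw [h2]; exact hbU, orient_key key (fun h => hbd (hkey h))⟩
      · exact hM.1 r (Finset.mem_of_mem_erase (Finset.mem_of_mem_erase hr))
  · intro r hr r' hr' hrr'
    rcases Finset.mem_insert.mp hr with rfl | hr
    · rcases Finset.mem_insert.mp hr' with rfl | hr'
      · exact absurd rfl hrr'
      rcases Finset.mem_insert.mp hr' with rfl | hr'
      · exact new_new
      · exact new_old n1 r' hr' (Or.inl hn1ends)
    rcases Finset.mem_insert.mp hr with rfl | hr
    · rcases Finset.mem_insert.mp hr' with rfl | hr'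
      · exact ⟨new_new.1.symm, new_new.2.2.1.symm, new_new.2.1.symm, new_new.2.2.2.symm⟩
      · rcases Finset.mem_insert.mp hr' with rfl | hr'
        · exact absurd rfl hrr'
        · exact new_old n2 r' hr' (Or.inr hn2ends)
    · rcases Finset.mem_insert.mp hr' with rfl | hr'
      · have h := new_old n1 r hr (Or.inl hn1ends)
        exact ⟨h.1.symm, h.2.2.1.symm, h.2.1.symm, h.2.2.2.symm⟩
      rcases Finset.mem_insert.mp hr' with rfl | hr'
      · have h := new_old n2 r hr (Or.inr hn2ends)
        exact ⟨h.1.symm, h.2.2.1.symm, h.2.1.symm, h.2.2.2.symm⟩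
      · exact hM.2.1 r (Finset.mem_of_mem_erase (Finset.mem_of_mem_erase hr)) r'
          (Finset.mem_of_mem_erase (Finset.mem_of_mem_erase hr')) hrr'
  · have hcS0 : S0.card = M.card - 2 := by
      rw [hS0, Finset.card_erase_of_mem hqe, Finset.card_erase_of_mem hp]; omega
    have hM2 : 2 ≤ M.card := Finset.one_lt_card.mpr ⟨(a, b), hp, q, hq, hpq⟩
    rw [Finset.card_insert_of_notMem hn1mem, Finset.card_insert_of_notMem hn2S0]
    have := hM.2.2
    omega
  · rw [Finset.sum_insert hn1mem, Finset.sum_insert hn2S0]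
    have h1 : (∑ r ∈ M, treeDist hT w r.2 r.1)
        = treeDist hT w b a + ∑ r ∈ M.erase (a, b), treeDist hT w r.2 r.1 :=
      (Finset.add_sum_erase _ (fun r => treeDist hT w r.2 r.1) hp).symm
    have h2 : (∑ r ∈ M.erase (a, b), treeDist hT w r.2 r.1)
        = treeDist hT w q.2 q.1 + ∑ r ∈ S0, treeDist hT w r.2 r.1 :=
      (Finset.add_sum_erase _ (fun r => treeDist hT w r.2 r.1) hqe).symm
    have e1 : treeDist hT w n1.2 n1.1 = treeDist hT w a c := orient_cost hT w key a c
    have e2 : treeDist hT w n2.2 n2.1 = treeDist hT w b d := orient_cost hT w key b d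
    rw [h1, h2, e1, e2]
    linarith
end Exchange

section PairingMin
variable {V : Type*} [Fintype V] [DecidableEq V] {T : SimpleGraph V} [DecidableRel T.Adj]
  (hT : T.IsTree) (w : Sym2 V → ℝ) (hw : ∀ e ∈ T.edgeSet, 0 ≤ w e)

include hw in
lemma pairing_min (key : V → ℕ) (hkey : Function.Injective key) (U : Finset V) :
    ∃ M : Finset (V × V), IsPairing key U M ∧
      (∑ r ∈ M, treeDist hT w r.2 r.1) ≤ ∑ e ∈ T.edgeFinset, w e := by
  classical
  obtain ⟨M0, hM0⟩ := pairing_exists key hkey U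
  set S : Finset (Finset (V × V)) := Finset.univ.filter (fun M => IsPairing key U M) with hSdef
  have hS0 : M0 ∈ S := by rw [hSdef, Finset.mem_filter]; exact ⟨Finset.mem_univ _, hM0⟩
  obtain ⟨M, hMS, hmin⟩ := S.exists_min_image (fun M => ∑ r ∈ M, treeDist hT w r.2 r.1) ⟨M0, hS0⟩
  have hM : IsPairing key U M := (Finset.mem_filter.mp hMS).2
  refine ⟨M, hM, ?_⟩
  -- rewrite each pair's distance as a sum over all edges of the tree
  have hvert : ∀ r ∈ M, treeDist hT w r.2 r.1
      = ∑ e ∈ T.edgeFinset, if e ∈ (treePath hT r.2 r.1).edges then w e else 0 := by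
    intro r _
    have hnodup := (treePath_isPath hT r.2 r.1).edges_nodup
    have hfe : T.edgeFinset ∩ (treePath hT r.2 r.1).edges.toFinset
        = (treePath hT r.2 r.1).edges.toFinset := by
      apply Finset.inter_eq_right.mpr
      intro e he
      rw [List.mem_toFinset] at he
      rw [SimpleGraph.mem_edgeFinset]
      exact (treePath hT r.2 r.1).edges_subset_edgeSet he
    have h2 : ∑ e ∈ T.edgeFinset, (if e ∈ (treePath hT r.2 r.1).edges then w e else 0)
        = ∑ e ∈ T.edgeFinset, (if e ∈ (treePath hT r.2 r.1).edges.toFinset then w e else 0) :=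
      Finset.sum_congr rfl (fun e _ => by simp [List.mem_toFinset])
    have h1 : treeDist hT w r.2 r.1 = ∑ e ∈ (treePath hT r.2 r.1).edges.toFinset, w e :=
      (List.sum_toFinset _ hnodup).symm
    rw [h1, h2, Finset.sum_ite_mem, hfe]
  -- swap the double sum and bound each edge's contribution
  rw [Finset.sum_congr rfl hvert, Finset.sum_comm]
  apply Finset.sum_le_sum
  intro e he
  have hwe : 0 ≤ w e := hw e (SimpleGraph.mem_edgeFinset.mp he)
  have hcount : (∑ r ∈ M, if e ∈ (treePath hT r.2 r.1).edges then w e else 0)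
      = (M.filter (fun r => e ∈ (treePath hT r.2 r.1).edges)).card * w e := by
    rw [Finset.sum_ite, Finset.sum_const_zero, add_zero, Finset.sum_const, nsmul_eq_mul]
  rw [hcount]
  set cnt := (M.filter (fun r => e ∈ (treePath hT r.2 r.1).edges)).card with hcnt
  rcases le_or_gt (w e) 0 with hle | hpos
  · have : w e = 0 := le_antisymm hle hwe
    rw [this]; simp
  · -- positive weight: at most one path can use e, else we improve the pairing
    have hone : cnt ≤ 1 := by
      by_contra hgt
      push_neg at hgt
      obtain ⟨p, hpf, q, hqf, hpq⟩ := Finset.one_lt_card.mp hgt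
      rw [Finset.mem_filter] at hpf hqf
      obtain ⟨hpM, hpe⟩ := hpf
      obtain ⟨hqM, hqe⟩ := hqf
      -- darts on the two paths realizing the shared edge e
      obtain ⟨d1, hd1, hd1e⟩ := List.mem_map.mp hpe
      obtain ⟨d2, hd2, hd2e⟩ := List.mem_map.mp hqe
      have hsplit1 := treeDist_split hT w d1 hd1
      have hsplit2 := treeDist_split hT w d2 hd2
      have hdd : d2 = d1 ∨ d2 = d1.symm := by
        rw [← SimpleGraph.dart_edge_eq_iff]
        rw [hd2e, hd1e]
      have htri1 := treeDist_triangle hT w hw p.1 d1.toProd.2 q.1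
      have htri1' := treeDist_triangle hT w hw p.1 d1.toProd.2 q.2
      have htri2 := treeDist_triangle hT w hw p.2 d1.toProd.1 q.2
      have htri2' := treeDist_triangle hT w hw p.2 d1.toProd.1 q.1
      have hsymm : ∀ x y : V, treeDist hT w x y = treeDist hT w y x := treeDist_symm hT w
      rw [hd1e] at hsplit1
      rw [hd2e] at hsplit2
      rcases hdd with heq | heq <;> rw [heq] at hsplit2
      · -- same orientation: repair with (q.1, q.2)
        obtain ⟨M', hM', hlt⟩ := exchange hT w key hkey hM hpM hqM hpq q.1 q.2
          (Or.inl ⟨rfl, rfl⟩) (by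
            rw [hsymm p.1 q.1, hsymm p.2 q.2]
            have e1 : treeDist hT w q.1 p.1
                ≤ treeDist hT w q.1 d1.toProd.2 + treeDist hT w d1.toProd.2 p.1 := by
              rw [hsymm q.1 p.1] at *
              calc treeDist hT w p.1 q.1 ≤ treeDist hT w p.1 d1.toProd.2 + treeDist hT w d1.toProd.2 q.1 := htri1
                _ = treeDist hT w q.1 d1.toProd.2 + treeDist hT w d1.toProd.2 p.1 := by
                    rw [hsymm p.1 d1.toProd.2, hsymm d1.toProd.2 q.1]; ring
            have e2 : treeDist hT w q.2 p.2
                ≤ treeDist hT w q.2 d1.toProd.1 + treeDist hT w d1.toProd.1 p.2 := by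
              calc treeDist hT w q.2 p.2 = treeDist hT w p.2 q.2 := hsymm q.2 p.2
                _ ≤ treeDist hT w p.2 d1.toProd.1 + treeDist hT w d1.toProd.1 q.2 := htri2
                _ = treeDist hT w q.2 d1.toProd.1 + treeDist hT w d1.toProd.1 p.2 := by
                    rw [hsymm p.2 d1.toProd.1, hsymm d1.toProd.1 q.2]; ring
            -- hsplit1 : D p.2 p.1 = D p.2 x + w e + D y p.1
            -- hsplit2 : D q.2 q.1 = D q.2 x + w e + D y q.1
            have g1 : treeDist hT w q.1 d1.toProd.2 = treeDist hT w d1.toProd.2 q.1 := hsymm _ _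
            have g2 : treeDist hT w q.2 d1.toProd.1 = treeDist hT w q.2 d1.toProd.1 := rfl
            have g3 : treeDist hT w d1.toProd.2 p.1 = treeDist hT w d1.toProd.2 p.1 := rfl
            have g4 : treeDist hT w d1.toProd.1 p.2 = treeDist hT w p.2 d1.toProd.1 := hsymm _ _
            linarith)
        have hM'S : M' ∈ S := by rw [hSdef, Finset.mem_filter]; exact ⟨Finset.mem_univ _, hM'⟩
        exact absurd (hmin M' hM'S) (not_le.mpr hlt)
      · -- opposite orientation: repair with (q.2, q.1)
        obtain ⟨M', hM', hlt⟩ := exchange hT w key hkey hM hpM hqM hpq q.2 q.1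
          (Or.inr ⟨rfl, rfl⟩) (by
            -- d2 = d1.symm : toProd = (y, x)
            have hx : (d1.symm).toProd.1 = d1.toProd.2 := rfl
            have hy : (d1.symm).toProd.2 = d1.toProd.1 := rfl
            rw [hx, hy] at hsplit2
            have e1 : treeDist hT w p.1 q.2
                ≤ treeDist hT w d1.toProd.2 p.1 + treeDist hT w q.2 d1.toProd.2 := by
              calc treeDist hT w p.1 q.2
                  ≤ treeDist hT w p.1 d1.toProd.2 + treeDist hT w d1.toProd.2 q.2 := htri1'
                _ = treeDist hT w d1.toProd.2 p.1 + treeDist hT w q.2 d1.toProd.2 := by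
                    rw [hsymm p.1 d1.toProd.2, hsymm d1.toProd.2 q.2]
            have e2 : treeDist hT w p.2 q.1
                ≤ treeDist hT w p.2 d1.toProd.1 + treeDist hT w d1.toProd.1 q.1 := htri2'
            linarith)
        have hM'S : M' ∈ S := by rw [hSdef, Finset.mem_filter]; exact ⟨Finset.mem_univ _, hM'⟩
        exact absurd (hmin M' hM'S) (not_le.mpr hlt)
    calc (cnt : ℝ) * w e ≤ 1 * w e := by
          apply mul_le_mul_of_nonneg_right _ hwe
          exact_mod_cast hone
      _ = w e := one_mul _
end PairingMin

section MainRec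
variable {V : Type*} [Fintype V] [DecidableEq V] {T : SimpleGraph V} [DecidableRel T.Adj]
  (hT : T.IsTree) (w : Sym2 V → ℝ) (hw : ∀ e ∈ T.edgeSet, 0 ≤ w e)

include hw in
lemma mainRec (key : V → ℕ) (hkey : Function.Injective key) (s : V)
    (hskey : ∀ v : V, v ≠ s → key s < key v) :
    ∀ N : ℕ, ∀ U : Finset V, U.card ≤ N → s ∈ U →
    ∃ parent : V → V, parent s = s ∧
      (∀ v ∈ U.erase s, parent v ∈ U ∧ key (parent v) < key v) ∧
      (∀ v ∈ U, ∃ k : ℕ, parent^[k] v = s) ∧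
      (∑ v ∈ U.erase s, treeDist hT w v (parent v))
        ≤ (Nat.clog 2 U.card : ℝ) * ∑ e ∈ T.edgeFinset, w e := by
  classical
  have hcT : 0 ≤ ∑ e ∈ T.edgeFinset, w e :=
    Finset.sum_nonneg (fun e he => hw e (SimpleGraph.mem_edgeFinset.mp he))
  intro N
  induction N with
  | zero =>
    intro U hcard hsU
    exact absurd (Finset.card_pos.mpr ⟨s, hsU⟩) (by omega)
  | succ N ih =>
    intro U hcard hsU
    by_cases hU1 : U.card ≤ 1
    · -- U = {s}
      have hUs : U = {s} := by
        apply Finset.eq_singleton_iff_unique_mem.mpr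
        refine ⟨hsU, fun x hx => ?_⟩
        by_contra hxs
        have : 1 < U.card := Finset.one_lt_card.mpr ⟨x, hx, s, hsU, hxs⟩
        omega
      refine ⟨id, rfl, ?_, ?_, ?_⟩
      · intro v hv
        rw [hUs] at hv
        simp at hv
      · intro v hv
        rw [hUs, Finset.mem_singleton] at hv
        exact ⟨0, hv⟩
      · rw [hUs]
        simp only [Finset.erase_singleton, Finset.sum_empty]
        positivity
    · push_neg at hU1
      obtain ⟨M, hM, hMcost⟩ := pairing_min hT w hw key hkey U
      set L := M.image Prod.snd with hL
      have hsndinj : ∀ p ∈ M, ∀ q ∈ M, p.2 = q.2 → p = q := by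
        intro p hp q hq hpq2
        by_contra hne
        exact (hM.2.1 p hp q hq hne).2.2.2 hpq2
      have hLU : L ⊆ U := by
        intro v hv
        rw [hL] at hv
        obtain ⟨p, hp, rfl⟩ := Finset.mem_image.mp hv
        exact (hM.1 p hp).2.1
      have hsL : s ∉ L := by
        intro hmem
        obtain ⟨p, hp, hp2⟩ := Finset.mem_image.mp hmem
        have h1 := (hM.1 p hp).2.2
        rw [hp2] at h1
        by_cases h : p.1 = s
        · rw [h] at h1; exact lt_irrefl _ h1
        · exact lt_irrefl _ (lt_trans (hskey p.1 h) h1)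
      set W := U \ L with hW
      have hsW : s ∈ W := Finset.mem_sdiff.mpr ⟨hsU, hsL⟩
      have hLcard : L.card = M.card := by
        rw [hL]
        apply Finset.card_image_of_injOn
        intro p hp q hq h
        exact hsndinj p hp q hq h
      have hWcard : W.card = U.card - M.card := by
        rw [hW, Finset.card_sdiff_of_subset hLU, hLcard]
      have hM1 : 1 ≤ M.card := by have := hM.2.2; omega
      have hWle : W.card ≤ N := by omega
      obtain ⟨pW, hpWs, hpWi, hpWreach, hpWsum⟩ := ih W hWle hsW
      set parent : V → V :=
        fun v => if h : ∃ p, p ∈ M ∧ p.2 = v then (Classical.choose h).1 else pW v with hpar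
      have hparL : ∀ p ∈ M, parent p.2 = p.1 := by
        intro p hp
        have hex : ∃ q, q ∈ M ∧ q.2 = p.2 := ⟨p, hp, rfl⟩
        rw [hpar]
        simp only [dif_pos hex]
        have hspec := Classical.choose_spec hex
        rw [hsndinj _ hspec.1 p hp hspec.2]
      have hparW : ∀ v ∈ W, parent v = pW v := by
        intro v hv
        have hnex : ¬ ∃ p, p ∈ M ∧ p.2 = v := by
          intro ⟨p, hp, hp2⟩
          have : v ∈ L := Finset.mem_image.mpr ⟨p, hp, hp2⟩
          exact (Finset.mem_sdiff.mp hv).2 this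
        rw [hpar]
        simp only [dif_neg hnex]
      have hWmaps : ∀ x ∈ W, pW x ∈ W := by
        intro x hx
        by_cases hxs : x = s
        · rw [hxs, hpWs]; exact hsW
        · exact (hpWi x (Finset.mem_erase.mpr ⟨hxs, hx⟩)).1
      have hiter : ∀ k : ℕ, ∀ x ∈ W, parent^[k] x = pW^[k] x := by
        intro k
        induction k with
        | zero => intro x _; simp
        | succ k ihk =>
          intro x hx
          rw [Function.iterate_succ_apply, Function.iterate_succ_apply, hparW x hx]
          exact ihk (pW x) (hWmaps x hx)
      have hfstW : ∀ p ∈ M, p.1 ∈ W := by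
        intro p hp
        apply Finset.mem_sdiff.mpr
        refine ⟨(hM.1 p hp).1, ?_⟩
        intro hmem
        obtain ⟨q, hq, hq2⟩ := Finset.mem_image.mp hmem
        by_cases hqp : q = p
        · rw [hqp] at hq2
          have := (hM.1 p hp).2.2
          rw [hq2] at this
          exact lt_irrefl _ this
        · exact (hM.2.1 q hq p hp hqp).2.2.1 hq2
      refine ⟨parent, ?_, ?_, ?_, ?_⟩
      · rw [hparW s hsW, hpWs]
      · intro v hv
        by_cases hvL : v ∈ L
        · obtain ⟨p, hp, rfl⟩ := Finset.mem_image.mp hvL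
          rw [hparL p hp]
          exact ⟨(hM.1 p hp).1, (hM.1 p hp).2.2⟩
        · have hvW : v ∈ W.erase s := by
            rw [Finset.mem_erase] at hv ⊢
            exact ⟨hv.1, Finset.mem_sdiff.mpr ⟨hv.2, hvL⟩⟩
          have := hpWi v hvW
          rw [hparW v (Finset.mem_of_mem_erase hvW)]
          exact ⟨(Finset.mem_sdiff.mp this.1).1, this.2⟩
      · intro v hv
        by_cases hvL : v ∈ L
        · obtain ⟨p, hp, rfl⟩ := Finset.mem_image.mp hvL
          obtain ⟨k, hk⟩ := hpWreach p.1 (hfstW p hp)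
          refine ⟨k + 1, ?_⟩
          rw [Function.iterate_succ_apply, hparL p hp, hiter k p.1 (hfstW p hp), hk]
        · have hvW : v ∈ W := Finset.mem_sdiff.mpr ⟨hv, hvL⟩
          obtain ⟨k, hk⟩ := hpWreach v hvW
          exact ⟨k, by rw [hiter k v hvW, hk]⟩
      · -- the cost bound
        have hsplitU : U.erase s = L ∪ W.erase s := by
          ext v
          rw [Finset.mem_erase, Finset.mem_union, Finset.mem_erase, Finset.mem_sdiff]
          constructor
          · intro ⟨hvs, hvU⟩
            by_cases hvL : v ∈ L
            · exact Or.inl hvL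
            · exact Or.inr ⟨hvs, hvU, hvL⟩
          · intro h
            rcases h with hvL | ⟨hvs, hvU, hvL⟩
            · exact ⟨fun h => hsL (h ▸ hvL), hLU hvL⟩
            · exact ⟨hvs, hvU⟩
        have hdisj : Disjoint L (W.erase s) := by
          apply Finset.disjoint_left.mpr
          intro v hvL hvW
          exact (Finset.mem_sdiff.mp (Finset.mem_of_mem_erase hvW)).2 hvL
        rw [hsplitU, Finset.sum_union hdisj]
        have hsumL : (∑ v ∈ L, treeDist hT w v (parent v)) = ∑ p ∈ M, treeDist hT w p.2 p.1 := by
          rw [hL, Finset.sum_image (fun p hp q hq h => hsndinj p hp q hq h)]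
          apply Finset.sum_congr rfl
          intro p hp
          rw [hparL p hp]
        have hsumW : (∑ v ∈ W.erase s, treeDist hT w v (parent v))
            = ∑ v ∈ W.erase s, treeDist hT w v (pW v) := by
          apply Finset.sum_congr rfl
          intro v hv
          rw [hparW v (Finset.mem_of_mem_erase hv)]
        rw [hsumL, hsumW]
        -- numeric part
        have hclog : Nat.clog 2 W.card + 1 ≤ Nat.clog 2 U.card := by
          have h2 : Nat.clog 2 U.card = Nat.clog 2 ((U.card + 2 - 1) / 2) + 1 :=
            Nat.clog_of_two_le (by norm_num) hU1
          have hWhalf : W.card ≤ (U.card + 2 - 1) / 2 := by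
            have := hM.2.2
            omega
          have := Nat.clog_mono_right 2 hWhalf
          omega
        have hclogR : ((Nat.clog 2 W.card : ℝ) + 1) ≤ (Nat.clog 2 U.card : ℝ) := by
          exact_mod_cast hclog
        have := hpWsum
        nlinarith [hMcost, hpWsum, hcT]
end MainRec

/-- Non-decreasing spanning arborescence of logarithmic cost: in a weighted tree `T`
with turnover times `τ` minimized strictly at the depot `s`, there is a parent
function whose arcs form a spanning arborescence rooted at `s`, with non-decreasing
turnover times along arcs, of total (tree-metric) cost at most `⌈log₂ n⌉ · c(T)`. -/
theorem nondecreasing_arborescence {V : Type*} [Fintype V] [DecidableEq V]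
    {T : SimpleGraph V} [DecidableRel T.Adj] (hT : T.IsTree) (w : Sym2 V → ℝ)
    (hw : ∀ e ∈ T.edgeSet, 0 ≤ w e) (τ : V → ℕ) (s : V)
    (hs : ∀ v : V, v ≠ s → τ s < τ v) :
    ∃ parent : V → V,
      (∀ v : V, v ≠ s → τ (parent v) ≤ τ v) ∧
      (∀ v : V, ∃ k : ℕ, parent^[k] v = s) ∧
      (∑ v ∈ Finset.univ.erase s, treeDist hT w v (parent v)) ≤
        (Nat.clog 2 (Fintype.card V) : ℝ) * ∑ e ∈ T.edgeFinset, w e := by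
  classical
  set n := Fintype.card V with hn
  have hn0 : 0 < n := Fintype.card_pos_iff.mpr ⟨s⟩
  set idx : V → ℕ := fun v => ((Fintype.equivFin V) v : ℕ) with hidx
  have hidxlt : ∀ v, idx v < n := fun v => ((Fintype.equivFin V) v).isLt
  have hidxinj : Function.Injective idx := by
    intro a b h
    have := Fin.val_injective h
    exact (Fintype.equivFin V).injective this
  set key : V → ℕ := fun v => n * τ v + idx v with hkeydef
  have hkeyτ : ∀ v, key v / n = τ v := by
    intro v
    rw [hkeydef]
    simp only []
    rw [Nat.mul_add_div hn0, Nat.div_eq_of_lt (hidxlt v), add_zero]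
  have hkeyidx : ∀ v, key v % n = idx v := by
    intro v
    rw [hkeydef]
    simp only []
    rw [Nat.mul_add_mod, Nat.mod_eq_of_lt (hidxlt v)]
  have hkey : Function.Injective key := by
    intro a b h
    apply hidxinj
    rw [← hkeyidx a, ← hkeyidx b, h]
  have hkeymono : ∀ a b : V, key a < key b → τ a ≤ τ b := by
    intro a b h
    have := Nat.div_le_div_right (c := n) (le_of_lt h)
    rw [hkeyτ a, hkeyτ b] at this
    exact this
  have hkeylt : ∀ a b : V, τ a < τ b → key a < key b := by
    intro a b h
    rw [hkeydef]
    simp only []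
    calc n * τ a + idx a < n * τ a + n := Nat.add_lt_add_left (hidxlt a) _
      _ = n * (τ a + 1) := by ring
      _ ≤ n * τ b := Nat.mul_le_mul_left n h
      _ ≤ n * τ b + idx b := Nat.le_add_right _ _
  have hskey : ∀ v : V, v ≠ s → key s < key v := fun v hv => hkeylt s v (hs v hv)
  obtain ⟨parent, hps, hpi, hpreach, hpsum⟩ :=
    mainRec hT w hw key hkey s hskey n Finset.univ (by rw [Finset.card_univ]) (Finset.mem_univ s)
  refine ⟨parent, ?_, ?_, ?_⟩
  · intro v hv
    have hmem : v ∈ Finset.univ.erase s := Finset.mem_erase.mpr ⟨hv, Finset.mem_univ v⟩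
    exact hkeymono _ _ (hpi v hmem).2
  · intro v
    exact hpreach v (Finset.mem_univ v)
  · rw [Finset.card_univ] at hpsum
    exact hpsum
end

section
/- For i ∈ ℕ define the sequence a^i of length 2^i by a^0 = (1) and, for 1 ≤ k ≤ 2^i, a^{i+1}(2k−1) = a^i(k) and a^{i+1}(2k) = 2^i + k; each a^i is a permutation of {1,…,2^i}. For positions j ∈ {1,…,2^i} set τ(j) = 2^{a^i(j)−1}, and let r be the position with τ(r) = 1 (namely r = 1). Then the minimum, over all functions parent : {j : τ(j) > 1} → {1,…,2^i} satisfying τ(parent(j)) < τ(j) for all j, of Σ_{j : τ(j) > 1} |j − parent(j)|, equals i·2^{i−1}. (In particular, on the unit-weight path graph on positions 1,…,2^i, whose total edge weight is 2^i − 1, every turnover-time-non-decreasing arborescence costs at least (i/2) times the weight of the path.) -/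
open scoped BigOperators

/-- The sequences `a^i` (1-indexed): `a^0 = (1)`, and `a^{i+1}` alternates elements of
`a^i` (at odd positions `2k-1`) with the elements `2^i + k` (at even positions `2k`).
So `aseq i j` is the `j`-th entry of `a^i` for `1 ≤ j ≤ 2^i`. -/
def aseq : ℕ → ℕ → ℕ
  | 0, _ => 1
  | i + 1, j => if j % 2 = 1 then aseq i ((j + 1) / 2) else 2 ^ i + j / 2

lemma aseq_odd (i k : ℕ) (hk : 1 ≤ k) : aseq (i+1) (2*k-1) = aseq i k := by
  have h1 : (2*k-1) % 2 = 1 := by omega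
  have h2 : (2*k-1+1)/2 = k := by omega
  simp [aseq, h1, h2]

lemma aseq_even (i k : ℕ) (hk : 1 ≤ k) : aseq (i+1) (2*k) = 2 ^ i + k := by
  have h1 : ¬ ((2*k) % 2 = 1) := by omega
  have h2 : (2*k)/2 = k := by omega
  simp [aseq, h1, h2]

lemma aseq_one (i : ℕ) : aseq i 1 = 1 := by
  induction i with
  | zero => rfl
  | succ i ih => simpa [aseq] using ih

lemma aseq_mem (i : ℕ) : ∀ j, 1 ≤ j → j ≤ 2 ^ i → 1 ≤ aseq i j ∧ aseq i j ≤ 2 ^ i := by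
  induction i with
  | zero =>
    intro j h1 h2
    have : j = 1 := by simpa using le_antisymm h2 h1
    subst this; simp [aseq]
  | succ i ih =>
    intro j h1 h2
    have h2p : 2 ^ (i+1) = 2 * 2 ^ i := by rw [pow_succ]; ring
    by_cases hj : j % 2 = 1
    · rw [aseq, if_pos hj]
      have hb := ih ((j+1)/2) (by omega) (by omega)
      omega
    · rw [aseq, if_neg hj]
      have h1p : 1 ≤ 2 ^ i := Nat.one_le_two_pow
      omega

lemma aseq_eq_one (i : ℕ) : ∀ j, 1 ≤ j → j ≤ 2 ^ i → aseq i j = 1 → j = 1 := by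
  induction i with
  | zero => intro j h1 h2 _; simp at h2; omega
  | succ i ih =>
    intro j h1 h2 hv
    have h2p : 2 ^ (i+1) = 2 * 2 ^ i := by rw [pow_succ]; ring
    by_cases hj : j % 2 = 1
    · rw [aseq, if_pos hj] at hv
      have := ih ((j+1)/2) (by omega) (by omega) hv
      omega
    · rw [aseq, if_neg hj] at hv
      have h1p : 1 ≤ 2 ^ i := Nat.one_le_two_pow
      omega

lemma aseq_ge_two (i : ℕ) (j : ℕ) (h1 : 2 ≤ j) (h2 : j ≤ 2 ^ i) : 2 ≤ aseq i j := by
  have hm := aseq_mem i j (by omega) h2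
  have := aseq_eq_one i j (by omega) h2
  omega

lemma aseq_surj (i : ℕ) : ∀ v, 1 ≤ v → v ≤ 2 ^ i → ∃ j, 1 ≤ j ∧ j ≤ 2 ^ i ∧ aseq i j = v := by
  induction i with
  | zero =>
    intro v h1 h2
    have : v = 1 := by simpa using le_antisymm h2 h1
    exact ⟨1, le_refl _, by simp, by simp [aseq, this]⟩
  | succ i ih =>
    intro v h1 h2
    have h2p : 2 ^ (i+1) = 2 * 2 ^ i := by rw [pow_succ]; ring
    by_cases hv : v ≤ 2 ^ i
    · obtain ⟨k, hk1, hk2, hk3⟩ := ih v h1 hv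
      exact ⟨2*k-1, by omega, by omega, by rw [aseq_odd i k hk1]; exact hk3⟩
    · refine ⟨2*(v - 2 ^ i), by omega, by omega, ?_⟩
      rw [aseq_even i _ (by omega)]
      omega

lemma filter_eq (i : ℕ) :
    (Finset.Icc 1 (2 ^ i)).filter (fun j => 1 < 2 ^ (aseq i j - 1)) = Finset.Icc 2 (2 ^ i) := by
  ext j
  simp only [Finset.mem_filter, Finset.mem_Icc]
  constructor
  · rintro ⟨⟨hj1, hj2⟩, h3⟩
    refine ⟨?_, hj2⟩
    by_contra h
    have hj : j = 1 := by omega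
    subst hj
    rw [aseq_one] at h3
    simp at h3
  · rintro ⟨hj1, hj2⟩
    have h2 := aseq_ge_two i j hj1 hj2
    refine ⟨⟨by omega, hj2⟩, ?_⟩
    calc (1:ℕ) < 2 ^ 1 := by norm_num
    _ ≤ 2 ^ (aseq i j - 1) := Nat.pow_le_pow_right (by norm_num) (by omega)

lemma sum_split (M : ℕ) (f : ℕ → ℕ) :
    ∑ j ∈ Finset.Icc 2 (2*M), f j
      = (∑ k ∈ Finset.Icc 1 M, f (2*k)) + ∑ k ∈ Finset.Icc 2 M, f (2*k-1) := by
  have hset : Finset.Icc 2 (2*M)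
      = (Finset.Icc 1 M).image (fun k => 2*k) ∪ (Finset.Icc 2 M).image (fun k => 2*k-1) := by
    ext j
    simp only [Finset.mem_union, Finset.mem_image, Finset.mem_Icc]
    constructor
    · intro h
      by_cases hj : j % 2 = 0
      · exact Or.inl ⟨j/2, by omega, by omega⟩
      · exact Or.inr ⟨(j+1)/2, by omega, by omega⟩
    · rintro (⟨x, hx, rfl⟩ | ⟨x, hx, rfl⟩) <;> omega
  have hdisj : Disjoint ((Finset.Icc 1 M).image (fun k => 2*k))
      ((Finset.Icc 2 M).image (fun k => 2*k-1)) := by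
    rw [Finset.disjoint_left]
    intro a ha hb
    simp only [Finset.mem_image, Finset.mem_Icc] at ha hb
    omega
  rw [hset, Finset.sum_union hdisj,
    Finset.sum_image (by intro x hx y hy h; simp only at h; omega),
    Finset.sum_image (by intro x hx y hy h; simp only [Finset.mem_coe, Finset.mem_Icc] at hx hy h; omega)]

/-- An explicit optimal parent function. -/
def P : ℕ → ℕ → ℕ
  | 0, _ => 1
  | i + 1, j => if j % 2 = 0 then j - 1 else 2 * P i ((j + 1) / 2) - 1

lemma P_valid (i : ℕ) :
    ∀ j, 2 ≤ j → j ≤ 2 ^ i → (1 ≤ P i j ∧ P i j ≤ 2 ^ i) ∧ aseq i (P i j) < aseq i j := by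
  induction i with
  | zero => intro j h1 h2; simp at h2; omega
  | succ i ih =>
    intro j h1 h2
    have h2p : 2 ^ (i+1) = 2 * 2 ^ i := by rw [pow_succ]; ring
    by_cases hj : j % 2 = 0
    · obtain ⟨k, rfl⟩ : ∃ k, j = 2*k := ⟨j/2, by omega⟩
      have hk1 : 1 ≤ k := by omega
      rw [P, if_pos hj]
      have hdm : 2*k - 1 = 2*k - 1 := rfl
      have heq : (2*k : ℕ) - 1 = 2*k - 1 := rfl
      constructor
      · omega
      · have h1' : (2*k:ℕ) - 1 = 2*k-1 := rfl
        rw [show (2*k:ℕ) - 1 = 2*k - 1 from rfl, aseq_odd i k hk1, aseq_even i k hk1]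
        have := aseq_mem i k hk1 (by omega)
        omega
    · obtain ⟨k, rfl⟩ : ∃ k, j = 2*k-1 := ⟨(j+1)/2, by omega⟩
      have hk2 : 2 ≤ k := by omega
      have hkM : k ≤ 2 ^ i := by omega
      rw [P, if_neg hj, show (2*k-1+1)/2 = k by omega]
      obtain ⟨⟨hb1, hb2⟩, hlt⟩ := ih k hk2 hkM
      constructor
      · omega
      · rw [aseq_odd i (P i k) hb1, aseq_odd i k (by omega)]
        exact hlt

lemma P_cost (i : ℕ) :
    ∑ j ∈ Finset.Icc 2 (2 ^ i), Nat.dist j (P i j) = i * 2 ^ (i - 1) := by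
  induction i with
  | zero => simp
  | succ i ih =>
    have h2p : 2 ^ (i+1) = 2 * 2 ^ i := by rw [pow_succ]; ring
    rw [h2p, sum_split]
    have hs1 : ∑ k ∈ Finset.Icc 1 (2 ^ i), Nat.dist (2*k) (P (i+1) (2*k)) = 2 ^ i := by
      rw [Finset.sum_congr rfl (g := fun _ => 1)]
      · simp
      · intro k hk
        simp only [Finset.mem_Icc] at hk
        rw [P, if_pos (by omega)]
        simp [Nat.dist]
        omega
    have hs2 : ∑ k ∈ Finset.Icc 2 (2 ^ i), Nat.dist (2*k-1) (P (i+1) (2*k-1))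
        = 2 * (i * 2 ^ (i-1)) := by
      rw [Finset.sum_congr rfl (g := fun k => 2 * Nat.dist k (P i k))]
      · rw [← Finset.mul_sum, ih]
      · intro k hk
        simp only [Finset.mem_Icc] at hk
        rw [P, if_neg (by omega), show (2*k-1+1)/2 = k by omega]
        obtain ⟨⟨hb1, hb2⟩, _⟩ := P_valid i k hk.1 hk.2
        simp [Nat.dist]
        omega
    rw [hs1, hs2]
    cases i with
    | zero => simp
    | succ n => rw [Nat.succ_sub_one, Nat.succ_sub_one]; ring

lemma lower (i : ℕ) :
    ∀ p : ℕ → ℕ,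
      (∀ j, 2 ≤ j → j ≤ 2 ^ i → (1 ≤ p j ∧ p j ≤ 2 ^ i) ∧ aseq i (p j) < aseq i j) →
      i * 2 ^ (i - 1) ≤ ∑ j ∈ Finset.Icc 2 (2 ^ i), Nat.dist j (p j) := by
  induction i with
  | zero => intro p _; simp
  | succ i ih =>
    intro p hp
    have h2p : 2 ^ (i+1) = 2 * 2 ^ i := by rw [pow_succ]; ring
    rw [h2p, sum_split]
    set p' : ℕ → ℕ := fun k => (p (2*k-1) + 1) / 2 with hp'def
    have claimA : ∀ k, 2 ≤ k → k ≤ 2 ^ i →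
        ((1 ≤ p' k ∧ p' k ≤ 2 ^ i) ∧ aseq i (p' k) < aseq i k) ∧ p (2*k-1) = 2 * p' k - 1 := by
      intro k hk1 hk2
      obtain ⟨⟨hq1, hq2⟩, hlt⟩ := hp (2*k-1) (by omega) (by omega)
      rw [aseq_odd i k (by omega)] at hlt
      have hak : aseq i k ≤ 2 ^ i := (aseq_mem i k (by omega) (by omega)).2
      have hodd : p (2*k-1) % 2 = 1 := by
        by_contra h
        obtain ⟨m, hm⟩ : ∃ m, p (2*k-1) = 2*m := ⟨p (2*k-1)/2, by omega⟩
        have hm1 : 1 ≤ m := by omega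
        rw [hm, aseq_even i m hm1] at hlt
        omega
      have hq : p (2*k-1) = 2 * p' k - 1 := by simp only [hp'def]; omega
      have hb1 : 1 ≤ p' k := by simp only [hp'def]; omega
      have hb2 : p' k ≤ 2 ^ i := by simp only [hp'def]; omega
      rw [hq, aseq_odd i (p' k) hb1] at hlt
      exact ⟨⟨⟨hb1, hb2⟩, hlt⟩, hq⟩
    have hs1 : 2 ^ i ≤ ∑ k ∈ Finset.Icc 1 (2 ^ i), Nat.dist (2*k) (p (2*k)) := by
      calc (2:ℕ) ^ i = ∑ _k ∈ Finset.Icc 1 (2 ^ i), 1 := by simp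
      _ ≤ _ := by
        apply Finset.sum_le_sum
        intro k hk
        simp only [Finset.mem_Icc] at hk
        obtain ⟨⟨_, _⟩, hlt⟩ := hp (2*k) (by omega) (by omega)
        have hne : p (2*k) ≠ 2*k := by
          intro h; rw [h] at hlt; exact lt_irrefl _ hlt
        simp [Nat.dist]
        omega
    have hs2 : 2 * (i * 2 ^ (i-1)) ≤ ∑ k ∈ Finset.Icc 2 (2 ^ i), Nat.dist (2*k-1) (p (2*k-1)) := by
      have heq : ∑ k ∈ Finset.Icc 2 (2 ^ i), Nat.dist (2*k-1) (p (2*k-1))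
          = ∑ k ∈ Finset.Icc 2 (2 ^ i), 2 * Nat.dist k (p' k) := by
        apply Finset.sum_congr rfl
        intro k hk
        simp only [Finset.mem_Icc] at hk
        obtain ⟨⟨⟨hb1, _⟩, _⟩, hq⟩ := claimA k hk.1 hk.2
        rw [hq]
        simp [Nat.dist]
        omega
      rw [heq, ← Finset.mul_sum]
      exact Nat.mul_le_mul_left 2 (ih p' (fun k hk1 hk2 => (claimA k hk1 hk2).1))
    have harith : (i+1) * 2 ^ (i+1-1) = 2 ^ i + 2 * (i * 2 ^ (i-1)) := by
      cases i with
      | zero => simp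
      | succ n => simp only [Nat.add_sub_cancel]; ring
    rw [harith]
    exact Nat.add_le_add hs1 hs2

/-- Each `a^i` is a permutation of `{1, …, 2^i}`, and for the turnover times
`τ(j) = 2^{a^i(j) - 1}` on the unit-weight path graph on positions `1, …, 2^i`, the
minimum over all parent functions with strictly smaller turnover time at the parent
(`τ(parent j) < τ(j)` for every non-root `j`) of the total cost
`∑_{j : τ(j) > 1} |j - parent j|` equals `i·2^{i-1}`. -/
theorem aseq_decreasing_tree_cost (i : ℕ) :
    (Finset.image (aseq i) (Finset.Icc 1 (2 ^ i)) = Finset.Icc 1 (2 ^ i)) ∧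
    IsLeast
      {c : ℕ | ∃ parent : ℕ → ℕ,
        (∀ j ∈ Finset.Icc 1 (2 ^ i), 1 < 2 ^ (aseq i j - 1) →
          parent j ∈ Finset.Icc 1 (2 ^ i) ∧
            (2 : ℕ) ^ (aseq i (parent j) - 1) < 2 ^ (aseq i j - 1)) ∧
        c = ∑ j ∈ (Finset.Icc 1 (2 ^ i)).filter (fun j => 1 < 2 ^ (aseq i j - 1)),
              Nat.dist j (parent j)}
      (i * 2 ^ (i - 1)) := by
  refine ⟨?_, ?_, ?_⟩
  · apply Finset.Subset.antisymm
    · intro v hv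
      simp only [Finset.mem_image, Finset.mem_Icc] at hv
      obtain ⟨j, ⟨hj1, hj2⟩, rfl⟩ := hv
      exact Finset.mem_Icc.mpr (aseq_mem i j hj1 hj2)
    · intro v hv
      simp only [Finset.mem_Icc] at hv
      obtain ⟨j, hj1, hj2, hj3⟩ := aseq_surj i v hv.1 hv.2
      exact Finset.mem_image.mpr ⟨j, Finset.mem_Icc.mpr ⟨hj1, hj2⟩, hj3⟩
  · -- membership
    refine ⟨P i, ?_, ?_⟩
    · intro j hj hτ
      simp only [Finset.mem_Icc] at hj
      have hj2 : 2 ≤ j := by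
        by_contra h
        have hone : j = 1 := by omega
        subst hone
        rw [aseq_one] at hτ
        simp at hτ
      obtain ⟨⟨hb1, hb2⟩, hlt⟩ := P_valid i j hj2 hj.2
      refine ⟨Finset.mem_Icc.mpr ⟨hb1, hb2⟩, ?_⟩
      apply Nat.pow_lt_pow_right one_lt_two
      have h1 := (aseq_mem i (P i j) hb1 hb2).1
      omega
    · rw [filter_eq]
      exact (P_cost i).symm
  · -- lower bound
    rintro c ⟨p, hp, rfl⟩
    rw [filter_eq]
    apply lower i p
    intro j h2 hle
    have hτ : 1 < 2 ^ (aseq i j - 1) := by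
      have := aseq_ge_two i j h2 hle
      calc (1:ℕ) < 2 ^ 1 := by norm_num
      _ ≤ 2 ^ (aseq i j - 1) := Nat.pow_le_pow_right (by norm_num) (by omega)
    obtain ⟨hmem, hlt⟩ := hp j (Finset.mem_Icc.mpr ⟨by omega, hle⟩) hτ
    simp only [Finset.mem_Icc] at hmem
    refine ⟨hmem, ?_⟩
    have h1 := (Nat.pow_lt_pow_iff_right one_lt_two).mp hlt
    omega
end
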